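/- Let K be an l×l invertible binary matrix with partial distances D_0, …, D_{l−1}. Then for every φ ∈ {0,…,l−1}, the minimum distance of the kernel code C_K^{(φ)} (the span of rows φ,…,l−1 of K) equals min{D_i : φ ≤ i ≤ l−1}. -/

import Mathlib

/-- Hamming distance from a vector `v` to a set (code) `C` in `𝔽₂ⁿ`. -/
noncomputable def distTo {n : ℕ} (C : Set (Fin n → ZMod 2)) (v : Fin n → ZMod 2) : ℕ :=
  sInf ((fun c => hammingDist v c) '' C)

/-- Minimum distance of a code: minimum Hamming weight of its nonzero elements. -/
noncomputable def minDist {n : ℕ} (C : Set (Fin n → ZMod 2)) : ℕ :=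
  sInf (hammingNorm '' (C \ {0}))

/-- The kernel code `C_K^{(φ)}`: the span of rows `φ, …, l−1` of `K`. -/
def kernelCode {l : ℕ} (K : Matrix (Fin l) (Fin l) (ZMod 2)) (φ : ℕ) :
    Submodule (ZMod 2) (Fin l → ZMod 2) :=
  Submodule.span (ZMod 2) {v | ∃ i : Fin l, φ ≤ (i : ℕ) ∧ v = K i}

/-- The `i`-th partial distance of `K`: distance from row `i` to the span of rows `i+1, …, l−1`. -/
noncomputable def PD {l : ℕ} (K : Matrix (Fin l) (Fin l) (ZMod 2)) (i : Fin l) : ℕ :=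
  distTo (kernelCode K ((i : ℕ) + 1) : Set (Fin l → ZMod 2)) (K i)

namespace Stmt6Aux

variable {l : ℕ} (K : Matrix (Fin l) (Fin l) (ZMod 2))

lemma kernelCode_set (φ : ℕ) :
    {v | ∃ i : Fin l, φ ≤ (i : ℕ) ∧ v = K i} = K '' {i : Fin l | φ ≤ (i : ℕ)} := by
  ext v
  simp only [Set.mem_setOf_eq, Set.mem_image]
  exact ⟨fun ⟨i, hi, hv⟩ => ⟨i, hi, hv.symm⟩, fun ⟨i, hi, hv⟩ => ⟨i, hi, hv.symm⟩⟩

lemma kernelCode_eq_bot {ψ : ℕ} (h : l ≤ ψ) : kernelCode K ψ = ⊥ := by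
  have : {v | ∃ i : Fin l, ψ ≤ (i : ℕ) ∧ v = K i} = (∅ : Set (Fin l → ZMod 2)) := by
    ext v
    simp only [Set.mem_setOf_eq, Set.mem_empty_iff_false, iff_false, not_exists]
    rintro i ⟨hi, -⟩
    have := i.2
    omega
  rw [kernelCode, this, Submodule.span_empty]

lemma kernelCode_mono {φ ψ : ℕ} (h : φ ≤ ψ) : kernelCode K ψ ≤ kernelCode K φ :=
  Submodule.span_mono (fun v ⟨i, hi, hv⟩ => ⟨i, le_trans h hi, hv⟩)

lemma row_mem (i : Fin l) : K i ∈ kernelCode K (i : ℕ) :=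
  Submodule.subset_span ⟨i, le_refl _, rfl⟩

lemma row_not_mem (hK : IsUnit K.det) (i : Fin l) : K i ∉ kernelCode K ((i : ℕ) + 1) := by
  have hli : LinearIndependent (ZMod 2) (fun j => K j) :=
    Matrix.linearIndependent_rows_iff_isUnit.mpr ((Matrix.isUnit_iff_isUnit_det K).mpr hK)
  have h := hli.notMem_span_image (s := {j : Fin l | (i : ℕ) + 1 ≤ (j : ℕ)}) (x := i)
    (by simp)
  rw [kernelCode, kernelCode_set]
  exact h

lemma gen_set_insert {φ : ℕ} (hφ : φ < l) :
    {v | ∃ i : Fin l, φ ≤ (i : ℕ) ∧ v = K i}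
      = insert (K ⟨φ, hφ⟩) {v | ∃ i : Fin l, φ + 1 ≤ (i : ℕ) ∧ v = K i} := by
  ext v
  constructor
  · rintro ⟨i, hi, rfl⟩
    rcases eq_or_lt_of_le hi with h | h
    · left
      have hie : i = ⟨φ, hφ⟩ := Fin.ext h.symm
      rw [hie]
    · exact Or.inr ⟨i, h, rfl⟩
  · rintro (rfl | ⟨i, hi, rfl⟩)
    · exact ⟨⟨φ, hφ⟩, le_refl _, rfl⟩
    · exact ⟨i, by omega, rfl⟩

lemma mem_decomp {φ : ℕ} (hφ : φ < l) {x : Fin l → ZMod 2} (hx : x ∈ kernelCode K φ) :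
    x ∈ kernelCode K (φ + 1) ∨ ∃ c ∈ kernelCode K (φ + 1), x = K ⟨φ, hφ⟩ + c := by
  rw [kernelCode, gen_set_insert K hφ, Submodule.mem_span_insert] at hx
  obtain ⟨a, z, hz, rfl⟩ := hx
  have ha : a = 0 ∨ a = 1 := by revert a; decide
  rcases ha with rfl | rfl
  · left; simpa [kernelCode] using hz
  · right; exact ⟨z, hz, by rw [one_smul]⟩

lemma two_add_ne (a b : ZMod 2) : a + b ≠ 0 ↔ a ≠ b := by revert a b; decide

lemma norm_add (x y : Fin l → ZMod 2) : hammingNorm (x + y) = hammingDist x y := by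
  simp only [hammingNorm, hammingDist, Pi.add_apply]
  congr 1
  ext i
  simp [two_add_ne]

lemma PD_le {i : Fin l} {c : Fin l → ZMod 2} (hc : c ∈ kernelCode K ((i : ℕ) + 1)) :
    PD K i ≤ hammingDist (K i) c :=
  Nat.sInf_le ⟨c, hc, rfl⟩

lemma achieve (hK : IsUnit K.det) (i : Fin l) :
    ∃ x ∈ kernelCode K (i : ℕ), x ≠ 0 ∧ hammingNorm x = PD K i := by
  have hne : ((fun c => hammingDist (K i) c) ''
      (kernelCode K ((i : ℕ) + 1) : Set (Fin l → ZMod 2))).Nonempty :=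
    ⟨_, 0, (kernelCode K _).zero_mem, rfl⟩
  obtain ⟨c, hc, hce⟩ := Nat.sInf_mem hne
  refine ⟨K i + c, ?_, ?_, ?_⟩
  · exact (kernelCode K _).add_mem (row_mem K i) (kernelCode_mono K (Nat.le_succ _) hc)
  · intro h0
    have hneg : ∀ a : ZMod 2, -a = a := by decide
    have : K i = c := by
      have := eq_neg_of_add_eq_zero_left h0
      rw [this]
      funext j
      exact hneg _
    exact row_not_mem K hK i (this ▸ hc)
  · rw [norm_add]
    exact hce

lemma lower_bound (hK : IsUnit K.det) :
    ∀ m φ, l ≤ φ + m → ∀ x ∈ kernelCode K φ, x ≠ 0 →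
      ∃ i : Fin l, φ ≤ (i : ℕ) ∧ PD K i ≤ hammingNorm x := by
  intro m
  induction m with
  | zero =>
    intro φ h x hx hx0
    rw [kernelCode_eq_bot K (by omega)] at hx
    exact absurd (Submodule.mem_bot _ |>.mp hx) hx0
  | succ m ih =>
    intro φ h x hx hx0
    by_cases hφ : φ < l
    · rcases mem_decomp K hφ hx with h1 | ⟨c, hc, rfl⟩
      · obtain ⟨i, hi, hle⟩ := ih (φ + 1) (by omega) x h1 hx0
        exact ⟨i, by omega, hle⟩
      · refine ⟨⟨φ, hφ⟩, le_refl _, ?_⟩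
        rw [norm_add]
        exact PD_le K hc
    · rw [kernelCode_eq_bot K (by omega)] at hx
      exact absurd (Submodule.mem_bot _ |>.mp hx) hx0

end Stmt6Aux

open Stmt6Aux in
theorem stmt_6 {l : ℕ} (K : Matrix (Fin l) (Fin l) (ZMod 2)) (hK : IsUnit K.det)
    (φ : ℕ) (hφ : φ < l) :
    minDist (kernelCode K φ : Set (Fin l → ZMod 2))
      = sInf {d | ∃ i : Fin l, φ ≤ (i : ℕ) ∧ d = PD K i} := by
  set iφ : Fin l := ⟨φ, hφ⟩ with hiφ
  have hiφv : (iφ : ℕ) = φ := rfl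
  obtain ⟨x₀, hx₀m, hx₀0, hx₀n⟩ := achieve K hK iφ
  rw [hiφv] at hx₀m
  have hTne : (hammingNorm '' ((kernelCode K φ : Set (Fin l → ZMod 2)) \ {0})).Nonempty :=
    ⟨hammingNorm x₀, x₀, ⟨hx₀m, hx₀0⟩, rfl⟩
  apply le_antisymm
  · -- minDist ≤ sInf S
    have hSne : {d | ∃ i : Fin l, φ ≤ (i : ℕ) ∧ d = PD K i}.Nonempty :=
      ⟨PD K iφ, iφ, le_of_eq hiφv.symm, rfl⟩
    obtain ⟨i, hi, hd⟩ := Nat.sInf_mem hSne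
    obtain ⟨x, hxm, hx0, hxn⟩ := achieve K hK i
    have hxm' : x ∈ kernelCode K φ := kernelCode_mono K hi hxm
    rw [hd, ← hxn]
    exact Nat.sInf_le ⟨x, ⟨hxm', hx0⟩, rfl⟩
  · -- sInf S ≤ minDist
    obtain ⟨x, ⟨hxm, hx0⟩, hxn⟩ := Nat.sInf_mem hTne
    obtain ⟨i, hi, hle⟩ := lower_bound K hK l φ (by omega) x hxm (by simpa using hx0)
    calc sInf {d | ∃ i : Fin l, φ ≤ (i : ℕ) ∧ d = PD K i}
        ≤ PD K i := Nat.sInf_le ⟨i, hi, rfl⟩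
      _ ≤ hammingNorm x := hle
      _ = minDist (kernelCode K φ : Set (Fin l → ZMod 2)) := hxn
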